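/- arXiv:1003.3808 — 6 statements merged into one kernel-verified Lean document; each statement's English description precedes it below -/
import Mathlib

section
/- Let F be a field of characteristic zero containing an element i with i² = −1, and let t ∈ F with 1 + t ≠ 0. Then there exists a change of Weierstrass variables C over F (in the sense of Mathlib's WeierstrassCurve.VariableChange, i.e. given by a unit u and elements r, s, v of F acting by (x, y) ↦ (u²x + r, u³y + u²sx + v)) such that applying C to the Weierstrass curve E₈'(t) yields exactly the Weierstrass curve E₈((1 − t)/(1 + t)); moreover one may take u = 2i(t + 1) and r = −(7t² + 8t + 8). -/
open WeierstrassCurve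

/-- The Weierstrass curve `E₈(t) : y² + 4xy + 4t²y = x³ + t²x²`. -/
def E8 {F : Type*} [CommRing F] (t : F) : WeierstrassCurve F :=
  ⟨4, t ^ 2, 4 * t ^ 2, 0, 0⟩

/-- The Weierstrass curve `E₈'(t) : y² + 4xy + 4t²y = x³ + t²x² + b(t)x + c(t)`. -/
def E8' {F : Type*} [CommRing F] (t : F) : WeierstrassCurve F :=
  ⟨4, t ^ 2, 4 * t ^ 2,
    -5 * t ^ 4 - 320 * t ^ 3 - 720 * t ^ 2 - 320 * t,
    3 * t ^ 6 - 704 * t ^ 5 - 5184 * t ^ 4 - 8896 * t ^ 3 - 5888 * t ^ 2 - 1024 * t⟩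

/-- over a field of characteristic zero containing `i` with `i² = -1`, for any `t`
with `1 + t ≠ 0`, there is a change of Weierstrass variables taking `E₈'(t)` to
`E₈((1 - t)/(1 + t))`, and one may take `u = 2i(t + 1)`, `r = -(7t² + 8t + 8)`. -/
theorem stmt_1 (F : Type*) [Field F] [CharZero F] (i t : F) (hi : i ^ 2 = -1)
    (ht : 1 + t ≠ 0) :
    ∃ C : VariableChange F,
      C • (E8' t) = E8 ((1 - t) / (1 + t)) ∧
      (C.u : F) = 2 * i * (t + 1) ∧ C.r = -(7 * t ^ 2 + 8 * t + 8) := by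
  have hi0 : i ≠ 0 := by
    intro h
    rw [h] at hi
    simp at hi
  have hu : (2 * i * (t + 1) : F) ≠ 0 := by
    apply mul_ne_zero (mul_ne_zero (by norm_num) hi0)
    rwa [add_comm] at ht
  refine ⟨⟨Units.mk0 _ hu, -(7 * t ^ 2 + 8 * t + 8), 4 * i * (t + 1) - 2,
    -16 * i * (t + 1) * (1 - t) ^ 2 + 12 * t ^ 2 + 16 * t + 16⟩, ?_, rfl, rfl⟩
  have ht' : (t + 1 : F) ≠ 0 := by rwa [add_comm] at ht
  ext <;>
    simp only [variableChange_def, E8, E8', Units.val_inv_eq_inv_val, Units.val_mk0, inv_pow] <;>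
    field_simp <;>
    ring_nf <;>
    simp only [hi, show i ^ 3 = -i by rw [pow_succ, hi]; ring] <;>
    ring
end

section
/- Let F = ℚ(t) be the field of rational functions in one variable t over ℚ. There is no change of Weierstrass variables C over F (in the sense of Mathlib's WeierstrassCurve.VariableChange) such that applying C to the Weierstrass curve E₈'(t) yields the Weierstrass curve E₈((1 − t)/(1 + t)); i.e., E₈'(t) and E₈((1−t)/(1+t)) are not isomorphic as Weierstrass curves over ℚ(t). -/
open WeierstrassCurve

/-- No element of `ℚ(t)` squares to `-1`. -/
lemma sq_ne_neg_one (f : RatFunc ℚ) : f ^ 2 ≠ -1 := by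
  intro h
  have hden := RatFunc.denom_ne_zero f
  have hnd := RatFunc.num_div_denom f
  have hden' : (algebraMap (Polynomial ℚ) (RatFunc ℚ)) f.denom ≠ 0 :=
    RatFunc.algebraMap_ne_zero hden
  have h1 : (algebraMap (Polynomial ℚ) (RatFunc ℚ)) f.num =
      f * (algebraMap (Polynomial ℚ) (RatFunc ℚ)) f.denom :=
    (div_eq_iff hden').mp hnd
  have h2 : (algebraMap (Polynomial ℚ) (RatFunc ℚ)) (f.num ^ 2 + f.denom ^ 2) = 0 := by
    rw [map_add, map_pow, map_pow, h1]
    rw [mul_pow, h]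
    ring
  have h3 : f.num ^ 2 + f.denom ^ 2 = 0 := by
    apply RatFunc.algebraMap_injective (K := ℚ)
    rw [h2, map_zero]
  have h4 : ∀ x : ℚ, f.denom.eval x = 0 := by
    intro x
    have := congrArg (Polynomial.eval x) h3
    simp only [Polynomial.eval_add, Polynomial.eval_pow, Polynomial.eval_zero] at this
    nlinarith [sq_nonneg (f.num.eval x), sq_nonneg (f.denom.eval x)]
  exact hden (Polynomial.zero_of_eval_zero _ h4)

/-- A polynomial expression in `RatFunc.X` with nonzero constant term is nonzero. -/
lemma aux_ne_zero (p : Polynomial ℚ) (hp : p ≠ 0) :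
    (algebraMap (Polynomial ℚ) (RatFunc ℚ)) p ≠ 0 :=
  RatFunc.algebraMap_ne_zero hp

/-- over `ℚ(t)` there is no change of Weierstrass variables taking `E₈'(t)` to
`E₈((1 - t)/(1 + t))`; i.e. the two curves are not isomorphic over `ℚ(t)`. -/
theorem stmt_2 :
    ¬ ∃ C : VariableChange (RatFunc ℚ),
        C • (E8' (RatFunc.X : RatFunc ℚ)) =
          E8 ((1 - RatFunc.X) / (1 + RatFunc.X) : RatFunc ℚ) := by
  rintro ⟨C, hC⟩
  set T : RatFunc ℚ := RatFunc.X with hT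
  -- 1 + X ≠ 0
  have hd : (1 + T : RatFunc ℚ) ≠ 0 := by
    have : (1 + T : RatFunc ℚ) = algebraMap (Polynomial ℚ) (RatFunc ℚ) (1 + Polynomial.X) := by
      simp [hT]
    rw [this]
    apply aux_ne_zero
    intro h
    have := congrArg (Polynomial.eval 0) h
    simp at this
  -- the square-root polynomial H
  set H : RatFunc ℚ := 32768 - 2129920*T - 279609344*T^2 - 2933227520*T^3 - 10976690176*T^4
      - 20168114176*T^5 - 20168114176*T^6 - 10976690176*T^7 - 2933227520*T^8
      - 279609344*T^9 - 2129920*T^10 + 32768*T^11 with hHdef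
  have hH : H ≠ 0 := by
    have hmap : H = algebraMap (Polynomial ℚ) (RatFunc ℚ)
        (32768 - 2129920*Polynomial.X - 279609344*Polynomial.X^2 - 2933227520*Polynomial.X^3
          - 10976690176*Polynomial.X^4 - 20168114176*Polynomial.X^5 - 20168114176*Polynomial.X^6
          - 10976690176*Polynomial.X^7 - 2933227520*Polynomial.X^8 - 279609344*Polynomial.X^9
          - 2129920*Polynomial.X^10 + 32768*Polynomial.X^11) := by
      simp [hHdef, hT, map_ofNat]
    rw [hmap]
    apply aux_ne_zero
    intro h
    have := congrArg (Polynomial.eval 0) h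
    simp at this
  -- invariants
  have h4 := congrArg WeierstrassCurve.c₄ hC
  have h6 := congrArg WeierstrassCurve.c₆ hC
  rw [WeierstrassCurve.variableChange_c₄] at h4
  rw [WeierstrassCurve.variableChange_c₆] at h6
  set w : RatFunc ℚ := ((C.u⁻¹ : (RatFunc ℚ)ˣ) : RatFunc ℚ) with hw
  have e41 : (E8' T).c₄ = 256*T^4 + 15360*T^3 + 34304*T^2 + 15360*T + 256 := by
    simp only [E8', WeierstrassCurve.c₄, WeierstrassCurve.b₂, WeierstrassCurve.b₄]
    ring
  have e61 : (E8' T).c₆ = -4096 + 516096*T + 4263936*T^2 + 7225344*T^3 + 4263936*T^4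
      + 516096*T^5 - 4096*T^6 := by
    simp only [E8', WeierstrassCurve.c₆, WeierstrassCurve.b₂, WeierstrassCurve.b₄,
      WeierstrassCurve.b₆]
    ring
  have e42 : (E8 ((1 - T) / (1 + T))).c₄ =
      (16*(1-T)^4 - 256*(1-T)^2*(1+T)^2 + 256*(1+T)^4) / (1+T)^4 := by
    simp only [E8, WeierstrassCurve.c₄, WeierstrassCurve.b₂, WeierstrassCurve.b₄]
    field_simp [hd]
    ring
  have e62 : (E8 ((1 - T) / (1 + T))).c₆ =
      (-64*(1-T)^6 - 1920*(1-T)^4*(1+T)^2 + 6144*(1-T)^2*(1+T)^4 - 4096*(1+T)^6) / (1+T)^6 := by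
    simp only [E8, WeierstrassCurve.c₆, WeierstrassCurve.b₂, WeierstrassCurve.b₄,
      WeierstrassCurve.b₆]
    field_simp [hd]
    ring
  rw [e41, e42] at h4
  rw [e61, e62] at h6
  rw [eq_div_iff (pow_ne_zero 4 hd)] at h4
  rw [eq_div_iff (pow_ne_zero 6 hd)] at h6
  -- combine to get `w ^ 2 * U = V`
  have h2 : w^2 * ((-4096 + 516096*T + 4263936*T^2 + 7225344*T^3 + 4263936*T^4
        + 516096*T^5 - 4096*T^6) * (1+T)^2
        * (16*(1-T)^4 - 256*(1-T)^2*(1+T)^2 + 256*(1+T)^4)) =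
      (-64*(1-T)^6 - 1920*(1-T)^4*(1+T)^2 + 6144*(1-T)^2*(1+T)^4 - 4096*(1+T)^6)
        * (256*T^4 + 15360*T^3 + 34304*T^2 + 15360*T + 256) := by
    rw [← h4, ← h6]
    ring
  set U : RatFunc ℚ := (-4096 + 516096*T + 4263936*T^2 + 7225344*T^3 + 4263936*T^4
      + 516096*T^5 - 4096*T^6) * (1+T)^2
      * (16*(1-T)^4 - 256*(1-T)^2*(1+T)^2 + 256*(1+T)^4) with hU
  have key : (w * U)^2 = -(H^2) := by
    have step : (w * U)^2 = ((-64*(1-T)^6 - 1920*(1-T)^4*(1+T)^2 + 6144*(1-T)^2*(1+T)^4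
        - 4096*(1+T)^6) * (256*T^4 + 15360*T^3 + 34304*T^2 + 15360*T + 256)) * U := by
      rw [← h2]; ring
    rw [step, hU, hHdef]
    ring
  have final : ((w * U) / H)^2 = -1 := by
    rw [div_pow, key, neg_div, div_self (pow_ne_zero 2 hH)]
  exact sq_ne_neg_one _ final
end

section
/- Let F = ℚ(t) be the rational function field over ℚ with t the indeterminate, and consider the Weierstrass curve E₈(t) over F. The affine point (0, 0) lies on E₈(t), is a nonsingular point, and has exact order 4 in the group of points E₈(t)(F); moreover 2·(0,0) is the 2-torsion point (−t², 0). -/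
open WeierstrassCurve

lemma E8_four_ne_zero : (4 : RatFunc ℚ) ≠ 0 := by
  intro hc
  apply (by norm_num : (4 : ℚ) ≠ 0)
  apply (algebraMap ℚ (RatFunc ℚ)).injective
  rw [map_ofNat, map_zero]
  exact hc

lemma some_eq_some {F : Type*} [Field F] {W : Affine F} {x₁ y₁ x₂ y₂ : F}
    (h₁ : W.Nonsingular x₁ y₁) (h₂ : W.Nonsingular x₂ y₂) (hx : x₁ = x₂) (hy : y₁ = y₂) :
    Affine.Point.some _ _ h₁ = Affine.Point.some _ _ h₂ := by
  subst hx; subst hy; rfl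

open Classical in
/-- over `ℚ(t)`, the point `(0, 0)` lies on `E₈(t)`, is nonsingular, has exact
order 4 in the group of points, and its double is the 2-torsion point `(-t², 0)`. -/
theorem stmt_3 :
    letI F := RatFunc ℚ
    letI W : Affine F := (E8 (RatFunc.X : F)).toAffine
    W.Equation 0 0 ∧
    ∃ (h : W.Nonsingular 0 0) (h' : W.Nonsingular (-(RatFunc.X : F) ^ 2) 0),
      addOrderOf (Affine.Point.some _ _ h) = 4 ∧
      2 • (Affine.Point.some _ _ h) = Affine.Point.some _ _ h' := by
  set W : Affine (RatFunc ℚ) := (E8 (RatFunc.X : RatFunc ℚ)).toAffine with hW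
  have ht : (RatFunc.X : RatFunc ℚ) ≠ 0 := RatFunc.X_ne_zero
  have ht2 : (RatFunc.X : RatFunc ℚ) ^ 2 ≠ 0 := pow_ne_zero 2 ht
  have ha : W.a₁ = 4 ∧ W.a₂ = (RatFunc.X : RatFunc ℚ) ^ 2 ∧ W.a₃ = 4 * (RatFunc.X : RatFunc ℚ) ^ 2 ∧
      W.a₄ = 0 ∧ W.a₆ = 0 := ⟨rfl, rfl, rfl, rfl, rfl⟩
  obtain ⟨ha1, ha2, ha3, ha4, ha6⟩ := ha
  have heq : W.Equation 0 0 := by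
    rw [Affine.equation_iff, ha1, ha2, ha3, ha4, ha6]; ring
  have hne : (0 : RatFunc ℚ) ≠ W.negY 0 0 := by
    rw [Affine.negY, ha1, ha3]
    intro hc
    apply ht2
    have h4 : (4 : RatFunc ℚ) * RatFunc.X ^ 2 = 0 := by linear_combination hc
    exact (mul_eq_zero.mp h4).resolve_left E8_four_ne_zero
  have h : W.Nonsingular 0 0 := by
    rw [Affine.nonsingular_iff]
    exact ⟨heq, Or.inr hne⟩
  have heq' : W.Equation (-(RatFunc.X : RatFunc ℚ) ^ 2) 0 := by
    rw [Affine.equation_iff, ha1, ha2, ha3, ha4, ha6]; ring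
  have h' : W.Nonsingular (-(RatFunc.X : RatFunc ℚ) ^ 2) 0 := by
    rw [Affine.nonsingular_iff]
    refine ⟨heq', Or.inl ?_⟩
    rw [ha1, ha2, ha4]
    intro hc
    apply pow_ne_zero 4 ht
    linear_combination -hc
  -- slope at (0,0)
  have hs : W.slope 0 0 0 0 = 0 := by
    rw [Affine.slope_of_Y_ne rfl hne, ha1, ha2, ha4]
    simp
  have hQne : (0 : RatFunc ℚ) = W.negY (-(RatFunc.X : RatFunc ℚ) ^ 2) 0 := by
    rw [Affine.negY, ha1, ha3]; ring
  -- 2 • P = Q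
  have hdouble : 2 • (Affine.Point.some _ _ h) = Affine.Point.some _ _ h' := by
    rw [two_nsmul, Affine.Point.add_self_of_Y_ne hne]
    apply some_eq_some
    · rw [Affine.addX, hs, ha1, ha2]; ring
    · rw [Affine.addY, Affine.negY, Affine.negAddY, Affine.addX, hs, ha1, ha2, ha3]; ring
  refine ⟨heq, h, h', ?_, hdouble⟩
  have h4 : (2 : ℕ) ^ 2 • (Affine.Point.some _ _ h) = 0 := by
    have : (2 : ℕ) ^ 2 = 2 * 2 := by norm_num
    rw [this, mul_smul, hdouble, two_nsmul, Affine.Point.add_self_of_Y_eq hQne]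
  have h2 : ¬ (2 : ℕ) ^ 1 • (Affine.Point.some _ _ h) = 0 := by
    rw [pow_one, hdouble]
    exact fun hc => Affine.Point.some_ne_zero h' hc
  calc addOrderOf (Affine.Point.some _ _ h) = 2 ^ (1 + 1) :=
        addOrderOf_eq_prime_pow h2 (by simpa using h4)
    _ = 4 := by norm_num
end

section
/- The polynomial X⁴ − 18X² + 40X − 27 is irreducible over ℚ, and its Galois group over ℚ has order 24; hence it is isomorphic to the symmetric group S₄. -/
open Polynomial

namespace Stmt13Aux

open IntermediateField

noncomputable def f : ℚ[X] := X ^ 4 - 18 * X ^ 2 + 40 * X - 27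
lemma f_natDegree : f.natDegree = 4 := by unfold f; compute_degree!
lemma f_monic : f.Monic := by
  unfold Monic; rw [leadingCoeff, f_natDegree]; unfold f
  simp [coeff_one, coeff_X]
lemma f_deriv : derivative f = 4 * X ^ 3 - 36 * X + 40 := by
  unfold f
  apply Polynomial.funext
  intro x
  simp
  ring
lemma f_sep : f.Separable := by
  rw [Polynomial.separable_def, f_deriv]
  refine ⟨C (1/24) * X ^ 2 - C (1/2), -C (1/96) * X ^ 3 + C (7/32) * X - C (5/16), ?_⟩
  unfold f
  apply Polynomial.funext
  intro x
  simp
  ring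
lemma f_ne_zero : f ≠ 0 := f_monic.ne_zero

noncomputable abbrev L := f.SplittingField

lemma no_rat_cuberoot_two : ∀ b : ℚ, b ^ 3 ≠ 2 := by
  intro b hb
  have hb' : ((b : ℝ)) ^ 3 = ((2 : ℤ) : ℝ) := by push_cast; rw [← Rat.cast_pow, hb, Rat.cast_ofNat]
  have : ¬ Irrational (b : ℝ) := by simp [Irrational]
  apply this
  apply irrational_nrt_of_notint_nrt 3 2 hb' _ (by norm_num)
  rintro ⟨y, hy⟩
  have hby : b = (y : ℚ) := by exact_mod_cast hy
  have hy3 : y ^ 3 = 2 := by rw [hby] at hb; exact_mod_cast hb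
  have h1 : y ≤ 1 ∨ 2 ≤ y := by omega
  rcases h1 with h | h
  · nlinarith [sq_nonneg y, sq_nonneg (y - 1), sq_nonneg (y + 1)]
  · nlinarith [sq_nonneg y]

lemma X3_sub_2_irred : Irreducible (X ^ 3 - C (2:ℚ)) :=
  X_pow_sub_C_irreducible_of_prime (by norm_num) no_rat_cuberoot_two

lemma three_dvd_finrank : 3 ∣ Module.finrank ℚ L := by
  have hsplit : Splits (f.map (algebraMap ℚ L)) := SplittingField.splits f
  have hcard : Multiset.card (f.map (algebraMap ℚ L)).roots = 4 := by
    rw [← hsplit.natDegree_eq_card_roots, natDegree_map, f_natDegree]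
  obtain ⟨a, ha⟩ := Multiset.card_pos_iff_exists_mem.mp (by rw [hcard]; norm_num)
  obtain ⟨t, hm⟩ := Multiset.exists_cons_of_mem ha
  have hc3 : Multiset.card t = 3 := by
    have := hcard; rw [hm, Multiset.card_cons] at this; omega
  obtain ⟨b, c, d, rfl⟩ := Multiset.card_eq_three.mp hc3
  have hprod : f.map (algebraMap ℚ L) =
      (X - C a) * ((X - C b) * ((X - C c) * ((X - C d) * 1))) := by
    have h1 := hsplit.eq_prod_roots_of_monic (f_monic.map (algebraMap ℚ L))
    rw [h1, hm]
    simp [Multiset.map_cons, Multiset.prod_cons]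
  have hmap : f.map (algebraMap ℚ L) = X ^ 4 - C 18 * X ^ 2 + C 40 * X - C 27 := by
    simp only [f]
    simp [map_ofNat]
  have hid : (X:L[X]) ^ 4 - C 18 * X ^ 2 + C 40 * X - C 27 =
      X ^ 4 - C (a+b+c+d) * X ^ 3 + C (a*b+a*c+a*d+b*c+b*d+c*d) * X ^ 2
        - C (a*b*c+a*b*d+a*c*d+b*c*d) * X + C (a*b*c*d) := by
    rw [← hmap, hprod]
    simp only [map_add, map_mul]
    ring
  have h3 := congrArg (fun q => coeff q 3) hid
  have h2 := congrArg (fun q => coeff q 2) hid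
  have h1 := congrArg (fun q => coeff q 1) hid
  have h0 := congrArg (fun q => coeff q 0) hid
  simp only [coeff_sub, coeff_add, coeff_C_mul, coeff_X_pow, coeff_X, coeff_C] at h3 h2 h1 h0
  norm_num at h3 h2 h1 h0
  set δ : L := -(a*b + c*d + 6)/4 with hδdef
  have hδ : δ ^ 3 = 2 := by
    have e1 : a + b + c + d = 0 := by linear_combination h3
    have e2 : a*b+a*c+a*d+b*c+b*d+c*d = -18 := by linear_combination -h2
    have e3 : a*b*c+a*b*d+a*c*d+b*c*d = -40 := by linear_combination h1
    have e4 : a*b*c*d = -27 := by linear_combination -h0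
    have key : (a*b+c*d) ^ 3 + 18 * (a*b+c*d) ^ 2 + 108 * (a*b+c*d) + 344 = 0 := by
      linear_combination ((a+b+c+d)*(a*b*c*d) - (a*b*c+a*b*d+a*c*d+b*c*d)*(a*b+c*d)) * e1
        + ((a*b+c*d)^2 - 4*(a*b*c*d)) * e2
        + ((a*b*c+a*b*d+a*c*d+b*c*d) - 40) * e3
        + (4*(a*b+c*d) + 72) * e4
    rw [hδdef]
    field_simp
    linear_combination -key
  have hroot : (Polynomial.aeval δ) (X ^ 3 - C (2:ℚ)) = 0 := by
    simp [hδ]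
  have hint : IsIntegral ℚ δ := IsIntegral.of_finite ℚ δ
  have hmin : minpoly ℚ δ = X ^ 3 - C (2:ℚ) :=
    (minpoly.eq_of_irreducible_of_monic X3_sub_2_irred hroot
      (monic_X_pow_sub_C _ (by norm_num))).symm
  have hfr : Module.finrank ℚ ℚ⟮δ⟯ = 3 := by
    rw [IntermediateField.adjoin.finrank hint, hmin]
    compute_degree!
  rw [← Module.finrank_mul_finrank ℚ ℚ⟮δ⟯ L, hfr]
  exact dvd_mul_right 3 _

lemma f_no_rat_root : ∀ r : ℚ, aeval r f ≠ 0 := by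
  intro r hr
  have hfz : f = Polynomial.map (algebraMap ℤ ℚ) (X ^ 4 - 18 * X ^ 2 + 40 * X - 27 : ℤ[X]) := by
    unfold f
    simp [Polynomial.map_ofNat]
  have hzmonic : (X ^ 4 - 18 * X ^ 2 + 40 * X - 27 : ℤ[X]).Monic := by
    unfold Monic
    rw [leadingCoeff]
    have : (X ^ 4 - 18 * X ^ 2 + 40 * X - 27 : ℤ[X]).natDegree = 4 := by compute_degree!
    rw [this]
    simp [coeff_one, coeff_X]
  have hr' : aeval r (X ^ 4 - 18 * X ^ 2 + 40 * X - 27 : ℤ[X]) = 0 := by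
    rw [hfz, aeval_map_algebraMap] at hr; exact hr
  obtain ⟨z, hz⟩ := isInteger_of_is_root_of_monic hzmonic hr'
  rw [← hz] at hr'
  have hzeq : z ^ 4 - 18 * z ^ 2 + 40 * z - 27 = 0 := by
    have := hr'
    simp only [map_sub, map_add, map_mul, map_pow, aeval_X, map_ofNat, algebraMap_int_eq,
      eq_intCast] at this
    exact_mod_cast this
  have hdvd : z ∣ 27 := ⟨z ^ 3 - 18 * z + 40, by linear_combination -hzeq⟩
  have hb := Int.le_of_dvd (by norm_num : (0:ℤ) < 27) (Int.natAbs_dvd.mpr hdvd)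
  have hb1 : -27 ≤ z := by omega
  have hb2 : z ≤ 27 := by omega
  interval_cases z <;> norm_num at hzeq

open Polynomial.Gal in
lemma quad_gal_card_dvd_two (q : ℚ[X]) (hq : q.natDegree = 2) :
    Nat.card q.Gal ∣ 2 := by
  classical
  haveI : Fact ((q.map (algebraMap ℚ q.SplittingField)).Splits) := ⟨SplittingField.splits q⟩
  have hinj := galActionHom_injective q q.SplittingField
  have hdvd := Subgroup.card_dvd_of_injective _ hinj
  have hcard : Fintype.card (q.rootSet q.SplittingField) ≤ 2 := by
    simp_rw [rootSet_def, Finset.coe_sort_coe, Fintype.card_coe]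
    calc (q.aroots q.SplittingField).toFinset.card
        ≤ Multiset.card (q.aroots q.SplittingField) := Multiset.toFinset_card_le _
      _ ≤ (q.map (algebraMap ℚ q.SplittingField)).natDegree := card_roots' _
      _ ≤ q.natDegree := natDegree_map_le
      _ = 2 := hq
  have hfact : ∀ k : ℕ, k ≤ 2 → Nat.factorial k ∣ 2 := by decide
  have hperm : Nat.card (Equiv.Perm (q.rootSet q.SplittingField)) ∣ 2 := by
    rw [Nat.card_eq_fintype_card, Fintype.card_perm]
    exact hfact _ hcard
  exact hdvd.trans hperm

lemma no_linear_factor (g h : ℚ[X]) (hgh : f = g * h) (hg1 : g.natDegree = 1) : False := by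
  have hc1 : g.coeff 1 ≠ 0 := by
    have : g.leadingCoeff ≠ 0 := leadingCoeff_ne_zero.mpr (fun h0 => by
      rw [h0] at hg1; simp at hg1)
    rwa [leadingCoeff, hg1] at this
  set r : ℚ := -g.coeff 0 / g.coeff 1 with hr
  have hgeval : eval r g = 0 := by
    conv_lhs => rw [eq_X_add_C_of_natDegree_le_one (le_of_eq hg1)]
    simp [hr]
    field_simp
    ring
  apply f_no_rat_root r
  have : aeval r f = eval r f := by rw [coe_aeval_eq_eval]
  rw [this, hgh, eval_mul, hgeval, zero_mul]

open Polynomial.Gal in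
lemma f_irred : Irreducible f := by
  have hfu : ¬ IsUnit f := by
    intro hu
    have := natDegree_eq_zero_of_isUnit hu
    rw [f_natDegree] at this
    omega
  by_contra hred
  rw [irreducible_iff] at hred
  push_neg at hred
  obtain ⟨g, h, hgh, hg, hh⟩ := hred hfu
  have hg0 : g ≠ 0 := by rintro rfl; exact f_ne_zero (by simpa using hgh)
  have hh0 : h ≠ 0 := by rintro rfl; exact f_ne_zero (by simpa using hgh)
  have hdeg : g.natDegree + h.natDegree = 4 := by
    rw [← natDegree_mul hg0 hh0, ← hgh, f_natDegree]
  have hnd : ∀ p : ℚ[X], p ≠ 0 → ¬ IsUnit p → 1 ≤ p.natDegree := by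
    intro p hp0 hpu
    refine Nat.one_le_iff_ne_zero.mpr (fun h0 => hpu ?_)
    rw [eq_C_of_natDegree_eq_zero h0]
    exact isUnit_C.mpr (isUnit_iff_ne_zero.mpr
      (fun hc => hp0 (by rw [eq_C_of_natDegree_eq_zero h0, hc, map_zero])))
  have hg1 := hnd g hg0 hg
  have hh1 := hnd h hh0 hh
  -- rule out linear factors
  have hgn1 : g.natDegree ≠ 1 := fun h1 => no_linear_factor g h hgh h1
  have hhn1 : h.natDegree ≠ 1 := fun h1 => no_linear_factor h g (by rw [hgh, mul_comm]) h1
  have hg2 : g.natDegree = 2 := by omega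
  have hh2 : h.natDegree = 2 := by omega
  -- the (2,2) case
  have h3 : 3 ∣ Nat.card f.Gal := by
    rw [card_of_separable f_sep]
    exact three_dvd_finrank
  have hdvd4 : Nat.card f.Gal ∣ 4 := by
    have hinj := restrictProd_injective g h
    have := Subgroup.card_dvd_of_injective _ hinj
    rw [Nat.card_prod] at this
    calc Nat.card f.Gal = Nat.card (g * h).Gal := by rw [← hgh]
      _ ∣ Nat.card g.Gal * Nat.card h.Gal := this
      _ ∣ 2 * 2 := mul_dvd_mul (quad_gal_card_dvd_two g hg2) (quad_gal_card_dvd_two h hh2)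
  have : (3:ℕ) ∣ 4 := h3.trans hdvd4
  norm_num at this

lemma f_aeval_real (x : ℝ) : aeval x f = x^4 - 18*x^2 + 40*x - 27 := by
  simp [f, map_ofNat]

lemma f_neg_on_mid (x : ℝ) (h1 : -4 ≤ x) (h2 : x ≤ 11/5) : x^4 - 18*x^2 + 40*x - 27 < 0 := by
  have a1 : 0 ≤ x + 4 := by linarith
  have a2 : 0 ≤ 11/5 - x := by linarith
  nlinarith [sq_nonneg (x^2+2*x-5), mul_nonneg a1 a2, sq_nonneg (x+1), sq_nonneg x,
    mul_nonneg (mul_nonneg a1 a2) a1, mul_nonneg (mul_nonneg a1 a2) a2,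
    mul_nonneg (mul_nonneg a1 a2) (sq_nonneg (x+1)), mul_nonneg (mul_nonneg a1 a2) (sq_nonneg x)]

lemma region_left (x y : ℝ) (hx : x ≤ -4) (hy : y ≤ -4)
    (hfx : x^4 - 18*x^2 + 40*x - 27 = 0) (hfy : y^4 - 18*y^2 + 40*y - 27 = 0) : x = y := by
  have hs : 0 ≤ -4 - x := by linarith
  have ht : 0 ≤ -4 - y := by linarith
  have hg : x^3 + x^2*y + x*y^2 + y^3 - 18*x - 18*y + 40 < 0 := by
    nlinarith [mul_nonneg hs ht, mul_nonneg (mul_nonneg hs ht) hs, mul_nonneg (mul_nonneg hs ht) ht,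
      mul_nonneg (mul_nonneg hs hs) hs, mul_nonneg (mul_nonneg ht ht) ht,
      mul_nonneg hs hs, mul_nonneg ht ht]
  have key : (x - y) * (x^3 + x^2*y + x*y^2 + y^3 - 18*x - 18*y + 40) = 0 := by
    linear_combination hfx - hfy
  rcases mul_eq_zero.mp key with h | h
  · linarith
  · exact absurd h (ne_of_lt hg)

lemma region_right (x y : ℝ) (hx : 11/5 ≤ x) (hy : 11/5 ≤ y)
    (hfx : x^4 - 18*x^2 + 40*x - 27 = 0) (hfy : y^4 - 18*y^2 + 40*y - 27 = 0) : x = y := by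
  have hs : 0 ≤ x - 11/5 := by linarith
  have ht : 0 ≤ y - 11/5 := by linarith
  have hg : 0 < x^3 + x^2*y + x*y^2 + y^3 - 18*x - 18*y + 40 := by
    nlinarith [mul_nonneg hs ht, mul_nonneg (mul_nonneg hs ht) hs, mul_nonneg (mul_nonneg hs ht) ht,
      mul_nonneg (mul_nonneg hs hs) hs, mul_nonneg (mul_nonneg ht ht) ht,
      mul_nonneg hs hs, mul_nonneg ht ht]
  have key : (x - y) * (x^3 + x^2*y + x*y^2 + y^3 - 18*x - 18*y + 40) = 0 := by
    linear_combination hfx - hfy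
  rcases mul_eq_zero.mp key with h | h
  · linarith
  · exact absurd h.symm (ne_of_lt hg)

lemma f_real_roots_card : Fintype.card (f.rootSet ℝ) = 2 := by
  classical
  have hc : ∀ s : Set ℝ, ContinuousOn (fun x : ℝ => aeval x f) s := fun s => f.continuousOn_aeval
  obtain ⟨x₁, hx₁mem, hx₁⟩ := intermediate_value_Icc' (by norm_num : (-6:ℝ) ≤ -5) (hc _)
    (show (0:ℝ) ∈ Set.Icc _ _ by
      simp only [Set.mem_Icc, f_aeval_real]; constructor <;> norm_num)
  obtain ⟨x₂, hx₂mem, hx₂⟩ := intermediate_value_Icc (by norm_num : (2:ℝ) ≤ 3) (hc _)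
    (show (0:ℝ) ∈ Set.Icc _ _ by
      simp only [Set.mem_Icc, f_aeval_real]; constructor <;> norm_num)
  simp only [f_aeval_real] at hx₁ hx₂
  obtain ⟨hx₁l, hx₁r⟩ := Set.mem_Icc.mp hx₁mem
  obtain ⟨hx₂l, hx₂r⟩ := Set.mem_Icc.mp hx₂mem
  have hne : x₁ ≠ x₂ := by intro h; rw [h] at hx₁r; linarith
  have hdich : ∀ z : ℝ, z^4 - 18*z^2 + 40*z - 27 = 0 → z ≤ -4 ∨ 11/5 ≤ z := by
    intro z hz
    by_cases hzl : z ≤ -4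
    · exact Or.inl hzl
    · refine Or.inr ?_
      by_contra hzr
      push_neg at hzl hzr
      exact absurd hz (ne_of_lt (f_neg_on_mid z (le_of_lt hzl) (le_of_lt hzr)))
  have hx₂r' : 11/5 ≤ x₂ := by
    rcases hdich x₂ hx₂ with h | h
    · linarith
    · exact h
  have hSet : f.rootSet ℝ = {x₁, x₂} := by
    ext z
    rw [mem_rootSet_of_ne f_ne_zero, f_aeval_real]
    constructor
    · intro hz
      rcases hdich z hz with h | h
      · exact Or.inl (region_left z x₁ h (by linarith) hz hx₁)
      · exact Or.inr (region_right z x₂ h hx₂r' hz hx₂)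
    · rintro (rfl | rfl)
      · exact hx₁
      · exact hx₂
  rw [← Set.toFinset_card, Set.toFinset_congr hSet]
  simp only [Set.toFinset_insert, Set.toFinset_singleton]
  exact Finset.card_pair hne

attribute [local instance] Polynomial.Gal.splits_ℚ_ℂ

open Polynomial.Gal in
lemma four_dvd_card_gal : 4 ∣ Nat.card f.Gal := by
  rw [card_of_separable f_sep]
  have hp : f.degree ≠ 0 := fun h => by
    have := natDegree_eq_zero_iff_degree_le_zero.mpr (le_of_eq h)
    rw [f_natDegree] at this; omega
  let α : f.SplittingField :=
    rootOfSplits (SplittingField.splits f) (by rwa [degree_map])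
  have hα : IsIntegral ℚ α := .of_finite ℚ α
  have hroot : aeval α f = 0 := by
    rw [aeval_def, ← eval_map]; exact eval_rootOfSplits _ _
  have hmin : minpoly ℚ α = f :=
    (minpoly.eq_of_irreducible_of_monic f_irred hroot f_monic).symm
  use Module.finrank ℚ⟮α⟯ f.SplittingField
  rw [← Module.finrank_mul_finrank ℚ ℚ⟮α⟯ f.SplittingField,
    IntermediateField.adjoin.finrank hα, hmin, f_natDegree]

lemma f_complex_roots_card : Fintype.card (f.rootSet ℂ) = 4 := by
  rw [card_rootSet_eq_natDegree f_sep (IsAlgClosed.splits _), f_natDegree]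

open Polynomial.Gal in
lemma conj_isSwap :
    (galActionHom f ℂ (restrict f ℂ (AlgEquiv.restrictScalars ℚ Complex.conjAe))).IsSwap := by
  rw [← Equiv.Perm.card_support_eq_two]
  have key := card_complex_roots_eq_card_real_add_card_not_gal_inv f
  rw [Set.toFinset_card, Set.toFinset_card, f_complex_roots_card, f_real_roots_card] at key
  omega

/-- `permCongr` as a `MulEquiv`. -/
noncomputable def permMulCongr {α β : Type*} (e : α ≃ β) :
    Equiv.Perm α ≃* Equiv.Perm β :=
  { Equiv.permCongr e with
    map_mul' := fun σ τ => by
      ext x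
      simp [Equiv.permCongr_apply, Equiv.Perm.mul_apply] }

open Polynomial.Gal in
lemma gal_card_eq : Nat.card f.Gal = 24 := by
  classical
  have hinj := galActionHom_injective f ℂ
  have hpermcard : Nat.card (Equiv.Perm (f.rootSet ℂ)) = 24 := by
    rw [Nat.card_eq_fintype_card, Fintype.card_perm, f_complex_roots_card]
    norm_num [Nat.factorial]
  have hdvd24 : Nat.card f.Gal ∣ 24 := by
    rw [← hpermcard]
    exact Subgroup.card_dvd_of_injective _ hinj
  have h3 : 3 ∣ Nat.card f.Gal := by
    rw [card_of_separable f_sep]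
    exact three_dvd_finrank
  have h4 := four_dvd_card_gal
  have hpos : 0 < Nat.card f.Gal := Nat.card_pos
  have hle : Nat.card f.Gal ≤ 24 := Nat.le_of_dvd (by norm_num) hdvd24
  -- exclude 12
  have hnot12 : Nat.card f.Gal ≠ 12 := by
    intro h12
    set H : Subgroup (Equiv.Perm (f.rootSet ℂ)) := (galActionHom f ℂ).range with hH
    have hcardH : Nat.card H = 12 := by
      rw [← h12]
      exact (Nat.card_congr (MonoidHom.ofInjective hinj).toEquiv).symm
    have hidx : H.index = 2 := by
      have := Subgroup.card_mul_index H
      rw [hcardH, hpermcard] at this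
      omega
    have hconjmem : ∀ (g τ' : Equiv.Perm (f.rootSet ℂ)), τ' ∈ H → g * τ' * g⁻¹ ∈ H := by
      intro g τ' hτ'
      rw [Subgroup.mul_mem_iff_of_index_two hidx, Subgroup.mul_mem_iff_of_index_two hidx]
      simp [hτ', Subgroup.inv_mem_iff (H := H)]
    have hτ : (galActionHom f ℂ (restrict f ℂ (AlgEquiv.restrictScalars ℚ Complex.conjAe))) ∈ H :=
      ⟨_, rfl⟩
    have hallswap : ∀ σ : Equiv.Perm (f.rootSet ℂ), σ.IsSwap → σ ∈ H := by
      intro σ hσ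
      obtain ⟨a, b, hab, rfl⟩ := hσ
      obtain ⟨w, x, hwx, hτeq⟩ := conj_isSwap
      have hconj := Equiv.Perm.isConj_swap hwx hab
      obtain ⟨c, hc⟩ := hconj
      have hkey : (c : Equiv.Perm (f.rootSet ℂ)) * Equiv.swap w x * (c : Equiv.Perm (f.rootSet ℂ))⁻¹
          = Equiv.swap a b := by
        rw [mul_inv_eq_iff_eq_mul]
        exact hc.eq
      rw [← hkey]
      exact hconjmem _ _ (by rw [← hτeq]; exact hτ)
    have htop : H = ⊤ := by
      rw [eq_top_iff, ← Equiv.Perm.closure_isSwap, Subgroup.closure_le]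
      intro σ hσ
      exact hallswap σ hσ
    have : Nat.card H = 24 := by rw [htop, Subgroup.card_top, hpermcard]
    omega
  -- conclude
  interval_cases h : Nat.card f.Gal <;> omega


end Stmt13Aux

open Stmt13Aux Polynomial.Gal

attribute [local instance] Polynomial.Gal.splits_ℚ_ℂ

/-- `X⁴ - 18X² + 40X - 27` is irreducible over `ℚ` and its Galois group over `ℚ`
has order 24, hence is isomorphic to `S₄`. -/
theorem stmt_13 :
    Irreducible (X ^ 4 - 18 * X ^ 2 + 40 * X - 27 : ℚ[X]) ∧
    Nat.card (X ^ 4 - 18 * X ^ 2 + 40 * X - 27 : ℚ[X]).Gal = 24 ∧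
    Nonempty ((X ^ 4 - 18 * X ^ 2 + 40 * X - 27 : ℚ[X]).Gal ≃* Equiv.Perm (Fin 4)) := by
  refine ⟨f_irred, gal_card_eq, ?_⟩
  classical
  have hbij : Function.Bijective (galActionHom f ℂ) := by
    rw [Fintype.bijective_iff_injective_and_card]
    refine ⟨galActionHom_injective f ℂ, ?_⟩
    rw [Fintype.card_perm, f_complex_roots_card, ← Nat.card_eq_fintype_card, gal_card_eq]
    norm_num [Nat.factorial]
  exact ⟨(MulEquiv.ofBijective _ hbij).trans
    (permMulCongr (Fintype.equivFinOfCardEq f_complex_roots_card))⟩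
end

section
/- There exists a ℚ-algebra homomorphism from the splitting field of X³ − 2 over ℚ into the splitting field of X⁴ + 6X² + 8X − 3 over ℚ; i.e., the splitting field of the quartic X⁴ + 6X² + 8X − 3 contains a copy of the splitting field of x³ − 2. -/
open Polynomial

/-- the splitting field of `X⁴ + 6X² + 8X - 3` over `ℚ` contains a copy of the
splitting field of `X³ - 2` over `ℚ`. -/
theorem stmt_14 :
    Nonempty ((X ^ 3 - 2 : ℚ[X]).SplittingField →ₐ[ℚ]
      (X ^ 4 + 6 * X ^ 2 + 8 * X - 3 : ℚ[X]).SplittingField) := by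
  classical
  set f : ℚ[X] := X ^ 4 + 6 * X ^ 2 + 8 * X - 3 with hfdef
  set L := f.SplittingField with hL
  have hmonic : f.Monic := by show (X ^ 4 + 6 * X ^ 2 + 8 * X - 3 : ℚ[X]).Monic; monicity!
  have hdeg : f.natDegree = 4 := by
    show (X ^ 4 + 6 * X ^ 2 + 8 * X - 3 : ℚ[X]).natDegree = 4; compute_degree!
  have hsplit : Splits (f.map (algebraMap ℚ L)) :=
    SplittingField.splits f
  have hcard : Multiset.card (f.map (algebraMap ℚ L)).roots = 4 := by
    rw [(splits_iff_card_roots).mp hsplit, natDegree_map, hdeg]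
  obtain ⟨a, t, hat⟩ : ∃ a t, (f.map (algebraMap ℚ L)).roots = a ::ₘ t := by
    have hne : (f.map (algebraMap ℚ L)).roots ≠ 0 := by
      intro h; rw [h] at hcard; simp at hcard
    obtain ⟨a, ha⟩ := Multiset.exists_mem_of_ne_zero hne
    exact ⟨a, _, (Multiset.cons_erase ha).symm⟩
  have hct : Multiset.card t = 3 := by
    rw [hat] at hcard; simpa using hcard
  obtain ⟨b, c, d, hbcd⟩ := Multiset.card_eq_three.mp hct
  have hroots : (f.map (algebraMap ℚ L)).roots = a ::ₘ b ::ₘ c ::ₘ {d} := by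
    rw [hat, hbcd]; rfl
  have heq : f.map (algebraMap ℚ L) = (X - C a) * (X - C b) * (X - C c) * (X - C d) := by
    have h := hsplit.eq_prod_roots
    rw [hroots] at h
    simpa [(hmonic.map (algebraMap ℚ L)).leadingCoeff, mul_assoc] using h
  have hmap : f.map (algebraMap ℚ L) = X ^ 4 + C 6 * X ^ 2 + C 8 * X - C 3 := by
    show (X ^ 4 + 6 * X ^ 2 + 8 * X - 3 : ℚ[X]).map (algebraMap ℚ L) = _
    simp [Polynomial.map_sub, Polynomial.map_add, Polynomial.map_mul, Polynomial.map_pow,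
      Polynomial.map_ofNat, map_ofNat]
  have hexp : (X ^ 4 + C 6 * X ^ 2 + C 8 * X - C 3 : L[X])
      = X ^ 4 - C (a + b + c + d) * X ^ 3
        + C (a*b + a*c + a*d + b*c + b*d + c*d) * X ^ 2
        - C (a*b*c + a*b*d + a*c*d + b*c*d) * X + C (a*b*c*d) := by
    rw [← hmap, heq]; simp only [C_add, C_mul]; ring
  have h1 : a + b + c + d = 0 := by
    have h := congrArg (fun p => coeff p 3) hexp
    simp only [coeff_add, coeff_sub, coeff_C_mul, coeff_X_pow, coeff_C, coeff_X] at h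
    norm_num at h
    linear_combination h
  have h2 : a*b + a*c + a*d + b*c + b*d + c*d = 6 := by
    have h := congrArg (fun p => coeff p 2) hexp
    simp only [coeff_add, coeff_sub, coeff_C_mul, coeff_X_pow, coeff_C, coeff_X] at h
    norm_num at h
    linear_combination -h
  have h3 : a*b*c + a*b*d + a*c*d + b*c*d = -8 := by
    have h := congrArg (fun p => coeff p 1) hexp
    simp only [coeff_add, coeff_sub, coeff_C_mul, coeff_X_pow, coeff_C, coeff_X] at h
    norm_num at h
    linear_combination h
  have h4 : a*b*c*d = -3 := by
    have h := congrArg (fun p => coeff p 0) hexp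
    simp only [coeff_add, coeff_sub, coeff_C_mul, coeff_X_pow, coeff_C, coeff_X] at h
    norm_num at h
    linear_combination -h
  set α : L := (a*b + c*d - 2) / 4 with hα
  set β : L := (a*c + b*d - 2) / 4 with hβ
  set γ : L := (a*d + b*c - 2) / 4 with hγ
  have t1 : α + β + γ = 0 := by
    rw [hα, hβ, hγ]; linear_combination h2 / 4
  have t2 : α*β + α*γ + β*γ = 0 := by
    rw [hα, hβ, hγ]
    linear_combination ((a*b*c + a*b*d + a*c*d + b*c*d) * h1 - 4*h4 - 4*h2) / 16
  have t3 : α*β*γ = 2 := by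
    rw [hα, hβ, hγ]
    linear_combination (((a*b*c + a*b*d + a*c*d + b*c*d) - 8) * h3
      + ((a+b+c+d)*(a*b*c*d) - 2*(a*b*c + a*b*d + a*c*d + b*c*d)) * h1
      + (8 - 4*(a*b + a*c + a*d + b*c + b*d + c*d)) * h4 + 16 * h2) / 64
  have key : ((X ^ 3 - 2 : ℚ[X]).map (algebraMap ℚ L)) = (X - C α) * (X - C β) * (X - C γ) := by
    have expand : (X - C α) * (X - C β) * (X - C γ)
        = X ^ 3 - C (α + β + γ) * X ^ 2 + C (α*β + α*γ + β*γ) * X - C (α*β*γ) := by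
      simp only [C_add, C_mul]; ring
    rw [expand, t1, t2, t3]
    simp [map_ofNat]
  have hs : Splits ((X ^ 3 - 2 : ℚ[X]).map (algebraMap ℚ L)) := by
    rw [key]
    exact Splits.mul (Splits.mul (Splits.X_sub_C _) (Splits.X_sub_C _)) (Splits.X_sub_C _)
  exact ⟨SplittingField.lift _ hs⟩
end

section
/- There exists a ℚ-algebra homomorphism from the splitting field of X³ − 2 over ℚ into the splitting field of X⁴ − 18X² + 40X − 27 over ℚ; i.e., the splitting field of the quartic X⁴ − 18X² + 40X − 27 contains a copy of the splitting field of x³ − 2. -/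
open Polynomial

/-- the splitting field of `X⁴ - 18X² + 40X - 27` over `ℚ` contains a copy of the
splitting field of `X³ - 2` over `ℚ`. -/
theorem stmt_15 :
    Nonempty ((X ^ 3 - 2 : ℚ[X]).SplittingField →ₐ[ℚ]
      (X ^ 4 - 18 * X ^ 2 + 40 * X - 27 : ℚ[X]).SplittingField) := by
  set f : ℚ[X] := X ^ 4 - 18 * X ^ 2 + 40 * X - 27 with hf
  set K := f.SplittingField with hK
  -- separability
  have hder : derivative f = 4 * X ^ 3 - 36 * X + 40 := by
    rw [hf]; simp [map_ofNat]; ring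
  have hb : (4*X^2 - 48) * f + (-X^3 + 21*X - 30) * (derivative f) = 96 := by
    rw [hder, hf]; ring
  have h96 : (C (1/96 : ℚ) : ℚ[X]) * 96 = 1 := by
    rw [show ((96:ℚ[X]) = C 96) from (map_ofNat (C : ℚ →+* ℚ[X]) 96).symm, ← C_mul]
    norm_num
  have hsep : f.Separable := by
    rw [Polynomial.separable_def]
    exact ⟨C (1/96) * (4*X^2 - 48), C (1/96) * (-X^3 + 21*X - 30), by
      linear_combination (C (1/96 : ℚ) : ℚ[X]) * hb + h96⟩
  have hmonic : f.Monic := by rw [hf]; monicity!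
  have hdeg : f.natDegree = 4 := by rw [hf]; compute_degree!
  set φ := algebraMap ℚ K with hφ
  have hsplits : Splits (f.map φ) :=
    SplittingField.splits f
  have hcard : Multiset.card (f.map φ).roots = 4 := by
    rw [(splits_iff_card_roots).mp hsplits, natDegree_map, hdeg]
  have hnd : (f.map φ).roots.Nodup := Polynomial.nodup_roots (hsep.map)
  -- extract the four roots
  obtain ⟨a, ha⟩ := Multiset.card_pos_iff_exists_mem.mp
    (show 0 < Multiset.card (f.map φ).roots by rw [hcard]; norm_num)
  obtain ⟨t, ht⟩ := Multiset.exists_cons_of_mem ha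
  rw [ht, Multiset.card_cons] at hcard
  obtain ⟨b, hb'⟩ := Multiset.card_pos_iff_exists_mem.mp (show 0 < Multiset.card t by omega)
  obtain ⟨t2, rfl⟩ := Multiset.exists_cons_of_mem hb'
  rw [Multiset.card_cons] at hcard
  obtain ⟨c, hc'⟩ := Multiset.card_pos_iff_exists_mem.mp (show 0 < Multiset.card t2 by omega)
  obtain ⟨t3, rfl⟩ := Multiset.exists_cons_of_mem hc'
  rw [Multiset.card_cons] at hcard
  obtain ⟨d, rfl⟩ := Multiset.card_eq_one.mp (show Multiset.card t3 = 1 by omega)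
  -- pairwise distinct
  rw [ht] at hnd
  simp only [Multiset.nodup_cons, Multiset.mem_cons, Multiset.mem_singleton,
    Multiset.nodup_singleton, and_true, not_or] at hnd
  obtain ⟨⟨hab, hac, had⟩, ⟨hbc, hbd⟩, hcd⟩ := hnd
  -- product decomposition
  have hP : f.map φ = (X - C a) * ((X - C b) * ((X - C c) * (X - C d))) := by
    conv_lhs => rw [hsplits.eq_prod_roots_of_monic (hmonic.map φ)]
    rw [ht]
    simp
  have hfK : f.map φ = (X ^ 4 - 18 * X ^ 2 + 40 * X - 27 : K[X]) := by
    have := congrArg (Polynomial.map φ) hf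
    rw [this]
    simp [Polynomial.map_ofNat]
  rw [hfK] at hP
  -- evaluation equations
  have h0 := congrArg (eval 0) hP
  have h1 := congrArg (eval 1) hP
  have hm1 := congrArg (eval (-1)) hP
  have h2 := congrArg (eval 2) hP
  simp only [eval_mul, eval_sub, eval_add, eval_pow, eval_ofNat, eval_X, eval_C,
    eval_one, eval_neg] at h0 h1 hm1 h2
  norm_num at h0 h1 hm1 h2
  -- elementary symmetric function values
  have hs1 : a + b + c + d = 0 := by
    linear_combination (1/2 : K) * h0 - (1/2 : K) * h1 - (1/6 : K) * hm1 + (1/6 : K) * h2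
  have hs2 : a*b + a*c + a*d + b*c + b*d + c*d = -18 := by
    linear_combination (1 : K) * h0 - (1/2 : K) * h1 - (1/2 : K) * hm1
  have hs3 : a*b*c + a*b*d + a*c*d + b*c*d = -40 := by
    linear_combination (-1/2 : K) * h0 + (1 : K) * h1 - (1/3 : K) * hm1 - (1/6 : K) * h2
  have hs4 : a*b*c*d = -27 := by linear_combination -h0
  -- the three cube roots of 2
  have key : ∀ t : K, t = a*b + c*d ∨ t = a*c + b*d ∨ t = a*d + b*c →
      (-(t + 6)/4) ^ 3 = 2 := by
    intro t htt
    have hres : (t + 6)^3 + 128 = 0 := by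
      rcases htt with rfl | rfl | rfl
      · linear_combination (-(a*b*c + a*b*d + a*c*d + b*c*d)*(a*b + c*d) + (a+b+c+d)*(a*b*c*d)) * hs1
          + ((a*b + c*d)^2 - 4*(a*b*c*d)) * hs2
          + ((a*b*c + a*b*d + a*c*d + b*c*d) - 40) * hs3
          + (4*(a*b + c*d) + 72) * hs4
      · linear_combination (-(a*b*c + a*b*d + a*c*d + b*c*d)*(a*c + b*d) + (a+b+c+d)*(a*b*c*d)) * hs1
          + ((a*c + b*d)^2 - 4*(a*b*c*d)) * hs2
          + ((a*b*c + a*b*d + a*c*d + b*c*d) - 40) * hs3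
          + (4*(a*c + b*d) + 72) * hs4
      · linear_combination (-(a*b*c + a*b*d + a*c*d + b*c*d)*(a*d + b*c) + (a+b+c+d)*(a*b*c*d)) * hs1
          + ((a*d + b*c)^2 - 4*(a*b*c*d)) * hs2
          + ((a*b*c + a*b*d + a*c*d + b*c*d) - 40) * hs3
          + (4*(a*d + b*c) + 72) * hs4
    linear_combination (-1/64 : K) * hres
  set u1 : K := -((a*b + c*d) + 6)/4 with hu1
  set u2 : K := -((a*c + b*d) + 6)/4 with hu2
  set u3 : K := -((a*d + b*c) + 6)/4 with hu3
  have hq1 : u1 ^ 3 = 2 := key _ (Or.inl rfl)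
  have hq2 : u2 ^ 3 = 2 := key _ (Or.inr (Or.inl rfl))
  have hq3 : u3 ^ 3 = 2 := key _ (Or.inr (Or.inr rfl))
  -- distinctness of the cube roots
  have h12 : u1 ≠ u2 := by
    intro h
    have : (a - d) * (b - c) = 0 := by
      rw [hu1, hu2] at h
      linear_combination (-4 : K) * h
    rcases mul_eq_zero.mp this with h' | h'
    · exact had (sub_eq_zero.mp h')
    · exact hbc (sub_eq_zero.mp h')
  have h13 : u1 ≠ u3 := by
    intro h
    have : (a - c) * (b - d) = 0 := by
      rw [hu1, hu3] at h
      linear_combination (-4 : K) * h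
    rcases mul_eq_zero.mp this with h' | h'
    · exact hac (sub_eq_zero.mp h')
    · exact hbd (sub_eq_zero.mp h')
  have h23 : u2 ≠ u3 := by
    intro h
    have : (a - b) * (c - d) = 0 := by
      rw [hu2, hu3] at h
      linear_combination (-4 : K) * h
    rcases mul_eq_zero.mp this with h' | h'
    · exact hab (sub_eq_zero.mp h')
    · exact hcd (sub_eq_zero.mp h')
  -- X^3 - 2 splits over K
  set g : ℚ[X] := X ^ 3 - 2 with hg
  have hgmap : g.map φ = (X ^ 3 - 2 : K[X]) := by
    rw [hg]; simp [Polynomial.map_ofNat]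
  have hnd3 : natDegree (g.map φ) = 3 := by rw [hgmap]; compute_degree!
  have hgne : (g.map φ) ≠ 0 := by
    intro h
    rw [h] at hnd3
    simp at hnd3
  have hroots : ∀ u : K, u ^ 3 = 2 → u ∈ (g.map φ).roots := by
    intro u hu
    rw [mem_roots hgne]
    rw [hgmap]
    simp [IsRoot, hu]
  have hle : (u1 ::ₘ u2 ::ₘ {u3}) ≤ (g.map φ).roots := by
    rw [Multiset.le_iff_subset (by simp [h12, h13, h23])]
    intro x hx
    simp only [Multiset.mem_cons, Multiset.mem_singleton] at hx
    rcases hx with rfl | rfl | rfl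
    · exact hroots _ hq1
    · exact hroots _ hq2
    · exact hroots _ hq3
  have hcard3 : Multiset.card (g.map φ).roots = 3 := by
    have hub : Multiset.card (g.map φ).roots ≤ 3 := by
      have := Polynomial.card_roots' (g.map φ)
      rwa [hnd3] at this
    have hlb := Multiset.card_le_card hle
    simp only [Multiset.card_cons, Multiset.card_singleton] at hlb
    omega
  have hsplitsg : Splits (g.map φ) := by
    rw [splits_iff_card_roots, hcard3, hnd3]
  exact ⟨SplittingField.lift g hsplitsg⟩
end
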